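/- Let k₁, k₂ ∈ ℕ, k₃ ∈ ℕ with k₃ ≥ 1, and define w : ℝ³ → ℝ by w(x) = cos(2πk₁x₁/l₁)·cos(2πk₂x₂/l₂)·sin(πk₃x₃/l₃⁺), and the vector fields H := (0, ∂₃w, −∂₂w) and E := (−iωε)⁻¹·(−∂₂²w − ∂₃²w, ∂₁∂₂w, ∂₁∂₃w). If ω² = (4π²/(εμ))·(k₁²/l₁² + k₂²/l₂² + k₃²/(4(l₃⁺)²)), then curl E(x) = iωμ·H(x) for every x ∈ ℝ³. -/
import Mathlib


open Real Complex Filter Topology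

/-- Partial derivative in the first coordinate. -/
noncomputable def pd1 {F : Type*} [NormedAddCommGroup F] [NormedSpace ℝ F]
    (f : ℝ × ℝ × ℝ → F) (x : ℝ × ℝ × ℝ) : F :=
  deriv (fun t => f (t, x.2.1, x.2.2)) x.1

/-- Partial derivative in the second coordinate. -/
noncomputable def pd2 {F : Type*} [NormedAddCommGroup F] [NormedSpace ℝ F]
    (f : ℝ × ℝ × ℝ → F) (x : ℝ × ℝ × ℝ) : F :=
  deriv (fun t => f (x.1, t, x.2.2)) x.2.1

/-- Partial derivative in the third coordinate. -/
noncomputable def pd3 {F : Type*} [NormedAddCommGroup F] [NormedSpace ℝ F]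
    (f : ℝ × ℝ × ℝ → F) (x : ℝ × ℝ × ℝ) : F :=
  deriv (fun t => f (x.1, x.2.1, t)) x.2.2

/-- Curl of a complex vector field on ℝ³. -/
noncomputable def curl3 (F : ℝ × ℝ × ℝ → ℂ × ℂ × ℂ) (x : ℝ × ℝ × ℝ) : ℂ × ℂ × ℂ :=
  (pd2 (fun y => (F y).2.2) x - pd3 (fun y => (F y).2.1) x,
   pd3 (fun y => (F y).1) x - pd1 (fun y => (F y).2.2) x,
   pd1 (fun y => (F y).2.1) x - pd2 (fun y => (F y).1) x)

/-- Divergence of a complex vector field on ℝ³. -/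
noncomputable def div3 (F : ℝ × ℝ × ℝ → ℂ × ℂ × ℂ) (x : ℝ × ℝ × ℝ) : ℂ :=
  pd1 (fun y => (F y).1) x + pd2 (fun y => (F y).2.1) x + pd3 (fun y => (F y).2.2) x

/-- Laplacian of a scalar function on ℝ³. -/
noncomputable def lap {F : Type*} [NormedAddCommGroup F] [NormedSpace ℝ F]
    (f : ℝ × ℝ × ℝ → F) (x : ℝ × ℝ × ℝ) : F :=
  pd1 (pd1 f) x + pd2 (pd2 f) x + pd3 (pd3 f) x

/-- Gradient of a complex scalar function on ℝ³. -/
noncomputable def grad3 (f : ℝ × ℝ × ℝ → ℂ) (x : ℝ × ℝ × ℝ) : ℂ × ℂ × ℂ :=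
  (pd1 f x, pd2 f x, pd3 f x)

lemma pdP1 (s : ℂ) (g h k g' : ℝ → ℝ) (hg : ∀ t, HasDerivAt g (g' t) t) (x : ℝ × ℝ × ℝ) :
    pd1 (fun y => s * ((g y.1 * h y.2.1 * k y.2.2 : ℝ) : ℂ)) x
      = s * ((g' x.1 * h x.2.1 * k x.2.2 : ℝ) : ℂ) :=
  (((((hg x.1).mul_const (h x.2.1)).mul_const (k x.2.2)).ofReal_comp).const_mul s).deriv

lemma pdP2 (s : ℂ) (g h k h' : ℝ → ℝ) (hh : ∀ t, HasDerivAt h (h' t) t) (x : ℝ × ℝ × ℝ) :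
    pd2 (fun y => s * ((g y.1 * h y.2.1 * k y.2.2 : ℝ) : ℂ)) x
      = s * ((g x.1 * h' x.2.1 * k x.2.2 : ℝ) : ℂ) :=
  (((((hh x.2.1).const_mul (g x.1)).mul_const (k x.2.2)).ofReal_comp).const_mul s).deriv

lemma pdP3 (s : ℂ) (g h k k' : ℝ → ℝ) (hk : ∀ t, HasDerivAt k (k' t) t) (x : ℝ × ℝ × ℝ) :
    pd3 (fun y => s * ((g y.1 * h y.2.1 * k y.2.2 : ℝ) : ℂ)) x
      = s * ((g x.1 * h x.2.1 * k' x.2.2 : ℝ) : ℂ) :=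
  ((((hk x.2.2).const_mul (g x.1 * h x.2.1)).ofReal_comp).const_mul s).deriv

lemma hda (a : ℝ) (t : ℝ) : HasDerivAt (fun u : ℝ => a * u) a t := by
  simpa using (hasDerivAt_id t).const_mul a

lemma hdcos (a : ℝ) : ∀ t, HasDerivAt (fun u => Real.cos (a * u)) (-Real.sin (a * t) * a) t
  | t => (hda a t).cos

lemma hdsin (a : ℝ) : ∀ t, HasDerivAt (fun u => Real.sin (a * u)) (Real.cos (a * t) * a) t
  | t => (hda a t).sin

lemma hdcos2 (a : ℝ) : ∀ t, HasDerivAt (fun u => -Real.sin (a * u) * a)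
    (-(Real.cos (a * t) * a) * a) t
  | t => ((hda a t).sin.neg.mul_const a)

lemma hdsin2 (a : ℝ) : ∀ t, HasDerivAt (fun u => Real.cos (a * u) * a)
    (-Real.sin (a * t) * a * a) t
  | t => ((hda a t).cos.mul_const a)

lemma hdcos3 (a : ℝ) : ∀ t, HasDerivAt (fun u => -(Real.cos (a * u) * a) * a)
    (-(-Real.sin (a * t) * a * a) * a) t
  | t => (((hda a t).cos.mul_const a).neg.mul_const a)

lemma hdsin3 (a : ℝ) : ∀ t, HasDerivAt (fun u => -Real.sin (a * u) * a * a)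
    (-(Real.cos (a * t) * a) * a * a) t
  | t => (((hda a t).sin.neg.mul_const a).mul_const a)

lemma hdsinC (a c : ℝ) : ∀ t, HasDerivAt (fun u => c * Real.sin (a * u))
    (c * (Real.cos (a * t) * a)) t
  | t => ((hda a t).sin.const_mul c)

/-- `curl E = iωμ H` under the resonance condition for the upper half. -/
theorem stmt4 (l₁ l₂ l₃p l₃m ε μ ω : ℝ)
    (hl₁ : 0 < l₁) (hl₂ : 0 < l₂) (hl₃p : 0 < l₃p) (hl₃m : 0 < l₃m)
    (hε : 0 < ε) (hμ : 0 < μ) (hω : 0 < ω)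
    (k₁ k₂ k₃ : ℕ) (hk₃ : 1 ≤ k₃)
    (hω2 : ω ^ 2 = 4 * π ^ 2 / (ε * μ) * ((k₁ : ℝ) ^ 2 / l₁ ^ 2 + (k₂ : ℝ) ^ 2 / l₂ ^ 2
        + (k₃ : ℝ) ^ 2 / (4 * l₃p ^ 2)))
    (w : ℝ × ℝ × ℝ → ℂ)
    (hw : w = fun x => ((Real.cos (2 * π * (k₁ : ℝ) * x.1 / l₁) *
        Real.cos (2 * π * (k₂ : ℝ) * x.2.1 / l₂) *
        Real.sin (π * (k₃ : ℝ) * x.2.2 / l₃p) : ℝ) : ℂ))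
    (E H : ℝ × ℝ × ℝ → ℂ × ℂ × ℂ)
    (hH : H = fun x => (0, pd3 w x, -(pd2 w x)))
    (hE : E = fun x => (-(Complex.I * (ω : ℂ) * (ε : ℂ)))⁻¹ •
        ((-(pd2 (pd2 w) x) - pd3 (pd3 w) x, pd1 (pd2 w) x, pd1 (pd3 w) x) : ℂ × ℂ × ℂ)) :
    ∀ x : ℝ × ℝ × ℝ, curl3 E x = (Complex.I * (ω : ℂ) * (μ : ℂ)) • H x := by
  set a : ℝ := 2 * π * (k₁ : ℝ) / l₁ with ha
  set b : ℝ := 2 * π * (k₂ : ℝ) / l₂ with hb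
  set c : ℝ := π * (k₃ : ℝ) / l₃p with hc
  set s : ℂ := (-(Complex.I * (ω : ℂ) * (ε : ℂ)))⁻¹ with hs
  have hw1 : w = fun y => (1 : ℂ) * ((Real.cos (a * y.1) * Real.cos (b * y.2.1) *
      Real.sin (c * y.2.2) : ℝ) : ℂ) := by
    rw [hw]; funext y
    rw [one_mul]
    norm_cast
    rw [show 2 * π * (k₁ : ℝ) * y.1 / l₁ = a * y.1 by rw [ha]; ring,
        show 2 * π * (k₂ : ℝ) * y.2.1 / l₂ = b * y.2.1 by rw [hb]; ring,
        show π * (k₃ : ℝ) * y.2.2 / l₃p = c * y.2.2 by rw [hc]; ring]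
  -- first derivatives
  have hd2w : pd2 w = fun y => (1 : ℂ) * ((Real.cos (a * y.1) * (-Real.sin (b * y.2.1) * b) *
      Real.sin (c * y.2.2) : ℝ) : ℂ) := by
    funext y; rw [hw1]; exact pdP2 1 (fun u => Real.cos (a*u)) (fun u => Real.cos (b*u)) (fun u => Real.sin (c*u)) _ (hdcos b) y
  have hd3w : pd3 w = fun y => (1 : ℂ) * ((Real.cos (a * y.1) * Real.cos (b * y.2.1) *
      (Real.cos (c * y.2.2) * c) : ℝ) : ℂ) := by
    funext y; rw [hw1]; exact pdP3 1 (fun u => Real.cos (a*u)) (fun u => Real.cos (b*u)) (fun u => Real.sin (c*u)) _ (hdsin c) y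
  -- second derivatives
  have hd22 : pd2 (pd2 w) = fun y => (1 : ℂ) * ((Real.cos (a * y.1) *
      (-(Real.cos (b * y.2.1) * b) * b) * Real.sin (c * y.2.2) : ℝ) : ℂ) := by
    funext y; rw [hd2w]; exact pdP2 1 (fun u => Real.cos (a*u)) (fun u => -Real.sin (b*u) * b) (fun u => Real.sin (c*u)) _ (hdcos2 b) y
  have hd33 : pd3 (pd3 w) = fun y => (1 : ℂ) * ((Real.cos (a * y.1) * Real.cos (b * y.2.1) *
      (-Real.sin (c * y.2.2) * c * c) : ℝ) : ℂ) := by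
    funext y; rw [hd3w]; exact pdP3 1 (fun u => Real.cos (a*u)) (fun u => Real.cos (b*u)) (fun u => Real.cos (c*u) * c) _ (hdsin2 c) y
  have hd12 : pd1 (pd2 w) = fun y => (1 : ℂ) * (((-Real.sin (a * y.1) * a) *
      (-Real.sin (b * y.2.1) * b) * Real.sin (c * y.2.2) : ℝ) : ℂ) := by
    funext y; rw [hd2w]; exact pdP1 1 (fun u => Real.cos (a*u)) (fun u => -Real.sin (b*u) * b) (fun u => Real.sin (c*u)) _ (hdcos a) y
  have hd13 : pd1 (pd3 w) = fun y => (1 : ℂ) * (((-Real.sin (a * y.1) * a) *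
      Real.cos (b * y.2.1) * (Real.cos (c * y.2.2) * c) : ℝ) : ℂ) := by
    funext y; rw [hd3w]; exact pdP1 1 (fun u => Real.cos (a*u)) (fun u => Real.cos (b*u)) (fun u => Real.cos (c*u) * c) _ (hdcos a) y
  -- components of E in product form
  have hE1 : (fun y => (E y).1) = fun y => s * ((Real.cos (a * y.1) * Real.cos (b * y.2.1) *
      ((b * b + c * c) * Real.sin (c * y.2.2)) : ℝ) : ℂ) := by
    funext y
    rw [hE]
    simp only [Prod.smul_fst, smul_eq_mul]
    rw [congrFun hd22 y, congrFun hd33 y]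
    push_cast
    ring
  have hE2 : (fun y => (E y).2.1) = fun y => s * (((-Real.sin (a * y.1) * a) *
      (-Real.sin (b * y.2.1) * b) * Real.sin (c * y.2.2) : ℝ) : ℂ) := by
    funext y
    rw [hE]
    simp only [Prod.smul_snd, Prod.smul_fst, smul_eq_mul]
    rw [congrFun hd12 y]
    ring
  have hE3 : (fun y => (E y).2.2) = fun y => s * (((-Real.sin (a * y.1) * a) *
      Real.cos (b * y.2.1) * (Real.cos (c * y.2.2) * c) : ℝ) : ℂ) := by
    funext y
    rw [hE]
    simp only [Prod.smul_snd, smul_eq_mul]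
    rw [congrFun hd13 y]
    ring
  -- key scalar identity
  have hsum : a ^ 2 + b ^ 2 + c ^ 2 = ε * μ * ω ^ 2 := by
    rw [hω2, ha, hb, hc]
    field_simp
    ring
  have hkey : s * ((a ^ 2 + b ^ 2 + c ^ 2 : ℝ) : ℂ) = Complex.I * (ω : ℂ) * (μ : ℂ) := by
    rw [hsum, hs]
    have h0 : (-(Complex.I * (ω : ℂ) * (ε : ℂ))) ≠ 0 := by
      simp [Complex.I_ne_zero, Complex.ext_iff, hω.ne', hε.ne']
    rw [inv_mul_eq_div, div_eq_iff h0]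
    push_cast
    ring_nf
    rw [Complex.I_sq]
    ring
  intro x
  -- compute the three curl components
  have c1 : pd2 (fun y => (E y).2.2) x = pd3 (fun y => (E y).2.1) x := by
    rw [hE3, hE2, pdP2 s (fun u => -Real.sin (a*u) * a) (fun u => Real.cos (b*u)) (fun u => Real.cos (c*u) * c) _ (hdcos b) x, pdP3 s (fun u => -Real.sin (a*u) * a) (fun u => -Real.sin (b*u) * b) (fun u => Real.sin (c*u)) _ (hdsin c) x]
  have c2 : pd3 (fun y => (E y).1) x - pd1 (fun y => (E y).2.2) x
      = (Complex.I * (ω : ℂ) * (μ : ℂ)) * pd3 w x := by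
    rw [hE1, hE3, pdP3 s (fun u => Real.cos (a*u)) (fun u => Real.cos (b*u)) (fun u => (b*b+c*c) * Real.sin (c*u)) _ (hdsinC c (b*b+c*c)) x, pdP1 s (fun u => -Real.sin (a*u) * a) (fun u => Real.cos (b*u)) (fun u => Real.cos (c*u) * c) _ (hdcos2 a) x,
      congrFun hd3w x]
    have : s * (((Real.cos (a * x.1) * Real.cos (b * x.2.1) *
        ((b * b + c * c) * (Real.cos (c * x.2.2) * c))) : ℝ) : ℂ)
        - s * (((-(Real.cos (a * x.1) * a) * a * Real.cos (b * x.2.1) *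
          (Real.cos (c * x.2.2) * c)) : ℝ) : ℂ)
        = (s * ((a ^ 2 + b ^ 2 + c ^ 2 : ℝ) : ℂ)) *
          ((Real.cos (a * x.1) * Real.cos (b * x.2.1) * (Real.cos (c * x.2.2) * c) : ℝ) : ℂ) := by
      push_cast; ring
    rw [this, hkey]; ring
  have c3 : pd1 (fun y => (E y).2.1) x - pd2 (fun y => (E y).1) x
      = (Complex.I * (ω : ℂ) * (μ : ℂ)) * (-(pd2 w x)) := by
    rw [hE2, hE1, pdP1 s (fun u => -Real.sin (a*u) * a) (fun u => -Real.sin (b*u) * b) (fun u => Real.sin (c*u)) _ (hdcos2 a) x, pdP2 s (fun u => Real.cos (a*u)) (fun u => Real.cos (b*u)) (fun u => (b*b+c*c) * Real.sin (c*u)) _ (hdcos b) x,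
      congrFun hd2w x]
    have : s * (((-(Real.cos (a * x.1) * a) * a * (-Real.sin (b * x.2.1) * b) *
        Real.sin (c * x.2.2)) : ℝ) : ℂ)
        - s * (((Real.cos (a * x.1) * (-Real.sin (b * x.2.1) * b) *
          ((b * b + c * c) * Real.sin (c * x.2.2))) : ℝ) : ℂ)
        = (s * ((a ^ 2 + b ^ 2 + c ^ 2 : ℝ) : ℂ)) *
          (-((Real.cos (a * x.1) * (-Real.sin (b * x.2.1) * b) * Real.sin (c * x.2.2) : ℝ) : ℂ)) := by
      push_cast; ring
    rw [this, hkey]; ring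
  rw [hH]
  show (_, _, _) = _
  rw [sub_eq_zero.mpr c1]
  simp only [Prod.smul_mk, smul_eq_mul, mul_zero]
  exact Prod.ext rfl (Prod.ext (by rw [c2]) (by rw [c3]))
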